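/- Let U ⊆ ℂ be open, f, g : ℂ → ℂ differentiable on U, and let κ, α ∈ ℂ and ε ∈ {1, −1}. Suppose that for all z ∈ U: g(z) ≠ 0, g(z)^2 = f(z)^2 − α*f(z), and f'(z) = ε*κ*g(z). Then the function u := 2*f − α + 2*ε*g satisfies u'(z) = κ*u(z) for all z ∈ U. -/

import Mathlib

theorem stmt_13 (U : Set ℂ) (hU : IsOpen U) (f g : ℂ → ℂ)
    (hf : DifferentiableOn ℂ f U) (hg : DifferentiableOn ℂ g U)
    (κ α ε : ℂ) (hε : ε = 1 ∨ ε = -1)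
    (hg0 : ∀ z ∈ U, g z ≠ 0)
    (hsq : ∀ z ∈ U, (g z) ^ 2 = (f z) ^ 2 - α * f z)
    (hf' : ∀ z ∈ U, deriv f z = ε * κ * g z) :
    ∀ z ∈ U, deriv (fun w => 2 * f w - α + 2 * ε * g w) z =
      κ * (2 * f z - α + 2 * ε * g z) := by
  intro z hz
  have hnz : U ∈ nhds z := hU.mem_nhds hz
  have hfz : DifferentiableAt ℂ f z := (hf z hz).differentiableAt hnz
  have hgz : DifferentiableAt ℂ g z := (hg z hz).differentiableAt hnz
  -- derivative of g
  have heq : (fun w => g w ^ 2) =ᶠ[nhds z] (fun w => f w ^ 2 - α * f w) := by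
    filter_upwards [hnz] with w hw using hsq w hw
  have hd := heq.deriv_eq
  have hd1 : deriv (fun w => g w ^ 2) z = 2 * g z * deriv g z := by
    rw [deriv_fun_pow hgz 2]; ring
  have hd2 : deriv (fun w => f w ^ 2 - α * f w) z
      = 2 * f z * deriv f z - α * deriv f z := by
    rw [deriv_fun_sub (f := fun w => f w ^ 2) ((hfz.pow 2)) (hfz.const_mul α), deriv_fun_pow hfz 2,
      deriv_const_mul α hfz]
    ring
  have hfd : deriv f z = ε * κ * g z := hf' z hz
  have hgne : g z ≠ 0 := hg0 z hz
  have hg' : deriv g z = (2 * f z - α) * (ε * κ) / 2 := by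
    have : 2 * g z * deriv g z = (2 * f z - α) * (ε * κ) * g z := by
      rw [← hd1, hd, hd2, hfd]; ring
    have h2g : (2 * g z) ≠ 0 := by simp [hgne]
    apply mul_left_cancel₀ h2g
    rw [this]; field_simp
  have hε2 : ε ^ 2 = 1 := by rcases hε with h | h <;> simp [h]
  rw [deriv_fun_add (by fun_prop) (by fun_prop), deriv_fun_sub (by fun_prop) (by fun_prop),
    deriv_const, deriv_const_mul 2 hfz, deriv_const_mul (2 * ε) hgz, hfd, hg']
  rcases hε with h | h <;> subst h <;> ring
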